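/- Let a > 0, σ ≤ μ, σ < −μ, r > 0 and D1 ≥ |μ| + |σ|, and suppose r D1 − 1 ≤ −μ/σ. If μ ≥ 0, then σ ≥ −1/r. If μ < 0, then μ r ∈ [−3 + 2√2, 0] and σ ≥ −(1/r)[ (1 + μ r)/2 + (1/2)√(1 + 6 μ r + (μ r)²) ] ≥ −1/r. -/

import Mathlib

set_option maxHeartbeats 1000000 in
/-- Lemma B.1 of Humphries–Magpantay: consequences of the inequality
`r D₁ - 1 ≤ -μ/σ`, using only `D₁ ≥ |μ| + |σ|`. -/
theorem stmt_15 (μ σ a r d1 : ℝ) (ha : 0 < a) (h1 : σ ≤ μ) (h2 : σ < -μ)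
    (hr : 0 < r) (hd1 : |μ| + |σ| ≤ d1)
    (hyp : r * d1 - 1 ≤ -μ / σ) :
    (0 ≤ μ → -(1 / r) ≤ σ) ∧
    (μ < 0 →
      μ * r ∈ Set.Icc (-3 + 2 * Real.sqrt 2) 0 ∧
      -(1 / r) * ((1 + μ * r) / 2 + Real.sqrt (1 + 6 * (μ * r) + (μ * r) ^ 2) / 2) ≤ σ ∧
      -(1 / r) ≤
        -(1 / r) * ((1 + μ * r) / 2 + Real.sqrt (1 + 6 * (μ * r) + (μ * r) ^ 2) / 2)) := by
  have hσ : σ < 0 := by linarith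
  have hσne : σ ≠ 0 := ne_of_lt hσ
  have hsabs : |σ| = -σ := abs_of_neg hσ
  have key : -μ ≤ σ * (r * d1 - 1) := by
    have h := mul_le_mul_of_nonpos_left hyp (le_of_lt hσ)
    have : σ * (-μ / σ) = -μ := by field_simp
    linarith [h, this.symm.le]
  constructor
  · intro hμ
    have hmabs : |μ| = μ := abs_of_nonneg hμ
    have hd1' : μ - σ ≤ d1 := by rw [hmabs, hsabs] at hd1; linarith
    have h3 : σ * (r * d1) ≤ σ * (r * (μ - σ)) :=
      mul_le_mul_of_nonpos_left (by nlinarith) (le_of_lt hσ)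
    -- (r σ + 1)(μ - σ) ≥ 0
    have h4 : 0 ≤ (r * σ + 1) * (μ - σ) := by nlinarith
    have hms : 0 < μ - σ := by linarith
    have h5 : 0 ≤ r * σ + 1 := by nlinarith
    have : -(1/r) = -1/r := by ring
    rw [this, div_le_iff₀ hr]
    nlinarith
  · intro hμ
    have hmabs : |μ| = -μ := abs_of_neg hμ
    have hd1' : -μ - σ ≤ d1 := by rw [hmabs, hsabs] at hd1; linarith
    have h3 : σ * (r * d1) ≤ σ * (r * (-μ - σ)) :=
      mul_le_mul_of_nonpos_left (by nlinarith) (le_of_lt hσ)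
    set m := μ * r with hm_def
    set x := σ * r with hx_def
    have hm : m < 0 := mul_neg_of_neg_of_pos hμ hr
    have hx : x < 0 := mul_neg_of_neg_of_pos hσ hr
    have hq : x ^ 2 + x * (1 + m) - m ≤ 0 := by
      have h6 : 0 ≤ σ * (r * (-μ - σ)) - σ + μ := by linarith
      have := mul_le_mul_of_nonneg_left (show 0 ≤ σ * (r * (-μ - σ)) - σ + μ from h6) (le_of_lt hr)
      nlinarith [mul_nonneg (le_of_lt hr) h6]
    set D : ℝ := 1 + 6 * m + m ^ 2 with hD_def
    have hD : 0 ≤ D := by nlinarith [sq_nonneg (2 * x + 1 + m)]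
    have hm1 : -1 < m := by
      by_contra h
      push_neg at h
      nlinarith [mul_nonneg (show (0:ℝ) ≤ -(1 + m) by linarith) (show (0:ℝ) ≤ -x by linarith)]
    have hs2 : Real.sqrt 2 ^ 2 = 2 := Real.sq_sqrt (by norm_num)
    have hs2n : 0 ≤ Real.sqrt 2 := Real.sqrt_nonneg 2
    have hicc : m ∈ Set.Icc (-3 + 2 * Real.sqrt 2) 0 := by
      constructor
      · nlinarith [mul_nonneg hs2n (show (0:ℝ) ≤ m + 3 by linarith)]
      · linarith
    have hsD : Real.sqrt D ^ 2 = D := Real.sq_sqrt hD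
    have hsDn : 0 ≤ Real.sqrt D := Real.sqrt_nonneg D
    have habs := abs_le_of_sq_le_sq' (show (2 * x + 1 + m) ^ 2 ≤ Real.sqrt D ^ 2 by nlinarith)
      hsDn
    have hlow : -Real.sqrt D ≤ 2 * x + 1 + m := habs.1
    refine ⟨hicc, ?_, ?_⟩
    · have hgoal : -((1 + m) / 2 + Real.sqrt D / 2) ≤ σ * r := by
        rw [← hx_def]; linarith
      have heq : -(1 / r) * ((1 + m) / 2 + Real.sqrt D / 2)
          = (-((1 + m) / 2 + Real.sqrt D / 2)) / r := by ring
      rw [heq, div_le_iff₀ hr]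
      linarith
    · have hsle : Real.sqrt D ≤ 1 - m := by
        have hDle : D ≤ (1 - m) ^ 2 := by nlinarith
        calc Real.sqrt D ≤ Real.sqrt ((1 - m) ^ 2) := Real.sqrt_le_sqrt hDle
          _ = 1 - m := Real.sqrt_sq (by linarith)
      have hB : (1 + m) / 2 + Real.sqrt D / 2 ≤ 1 := by linarith
      have hrinv : 0 < 1 / r := by positivity
      have := mul_le_mul_of_nonneg_left hB (le_of_lt hrinv)
      linarith
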